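/- Let A ∈ gl_n(k[[z]]) and suppose its constant term Λ := A(0) is a diagonal matrix diag(λ_1,…,λ_n) with λ_i − λ_j ∉ ℤ for all i ≠ j. Then there exists p ∈ GL_n(k[[z]]) with p ≡ I_n (mod z) such that p·A·p^{-1} − τ(p)·p^{-1} = Λ. -/

import Mathlib

noncomputable section

open Polynomial Matrix

variable {k : Type*} [Field k]

/-- The derivation `τ = z·d/dz` on `k((z))`, acting coefficientwise by `n`. -/
def tauF (f : LaurentSeries k) : LaurentSeries k :=
  ⟨fun n => (n : k) * f.coeff n,
    f.isPWO_support'.mono (fun n hn => by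
      simp only [Function.mem_support, ne_eq] at hn ⊢
      exact fun h => hn (by rw [h, mul_zero]))⟩

/-- The recursively defined coefficient matrices of the gauge transformation `p`. -/
def stmt13P {n : ℕ} (lam : Fin n → k) (Cm : ℕ → Matrix (Fin n) (Fin n) k) :
    ℕ → Matrix (Fin n) (Fin n) k
  | 0 => 1
  | (m + 1) => Matrix.of fun i j =>
      (∑ l ∈ (Finset.range (m + 1)).attach,
        (stmt13P lam Cm l.1 * Cm (m + 1 - l.1)) i j) / (lam i - lam j + (m + 1 : ℕ))
  decreasing_by exact Finset.mem_range.mp l.2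

lemma stmt13P_key {n : ℕ} (lam : Fin n → k) (Cm : ℕ → Matrix (Fin n) (Fin n) k)
    (hC0 : Cm 0 = Matrix.diagonal lam)
    (hden : ∀ i j, ∀ m : ℕ, 0 < m → lam i - lam j + (m : k) ≠ 0) :
    ∀ (m : ℕ) (i j : Fin n),
      ∑ l ∈ Finset.range (m + 1), (stmt13P lam Cm l * Cm (m - l)) i j
        = lam i * stmt13P lam Cm m i j + (m : k) * stmt13P lam Cm m i j := by
  intro m i j
  cases m with
  | zero =>
      rw [Finset.range_one, Finset.sum_singleton]
      have h0 : stmt13P lam Cm 0 = 1 := by rw [stmt13P]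
      rw [Nat.sub_zero, h0, hC0, Matrix.one_mul, Matrix.diagonal_apply,
        Matrix.one_apply]
      by_cases h : i = j <;> simp [h]
  | succ m =>
      rw [Finset.sum_range_succ]
      have hPm : stmt13P lam Cm (m + 1) i j
          = (∑ l ∈ Finset.range (m + 1), (stmt13P lam Cm l * Cm (m + 1 - l)) i j)
            / (lam i - lam j + (m + 1 : ℕ)) := by
        rw [stmt13P]
        simp [Finset.sum_attach (Finset.range (m + 1))
          (fun l => (stmt13P lam Cm l * Cm (m + 1 - l)) i j)]
      have hd := hden i j (m + 1) (Nat.succ_pos m)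
      have hS : ∑ l ∈ Finset.range (m + 1), (stmt13P lam Cm l * Cm (m + 1 - l)) i j
          = stmt13P lam Cm (m + 1) i j * (lam i - lam j + (m + 1 : ℕ)) := by
        rw [hPm, div_mul_cancel₀ _ hd]
      rw [Nat.sub_self, hS, hC0, Matrix.mul_diagonal]
      push_cast
      ring

/-- if `A ∈ gl_n(k[[z]])` has constant term `Λ = diag(λ₁,…,λₙ)` with
`λᵢ − λⱼ ∉ ℤ` for `i ≠ j`, then there is `p ∈ GL_n(k[[z]])` with `p ≡ Iₙ (mod z)`
such that `p·A·p⁻¹ − τ(p)·p⁻¹ = Λ`. -/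
theorem stmt13 [IsAlgClosed k] [CharZero k] {n : ℕ}
    (A : Matrix (Fin n) (Fin n) (LaurentSeries k))
    (hA : ∀ i j, ∀ m : ℤ, m < 0 → (A i j).coeff m = 0)
    (hdiag : ∀ i j, i ≠ j → (A i j).coeff 0 = 0)
    (hres : ∀ i j, i ≠ j → ∀ mz : ℤ, (A i i).coeff 0 - (A j j).coeff 0 ≠ (mz : k)) :
    ∃ p : Matrix (Fin n) (Fin n) (LaurentSeries k),
      IsUnit p.det ∧
      (∀ i j, ∀ m : ℤ, m ≤ 0 → ((p - 1) i j).coeff m = 0) ∧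
      p * A * p⁻¹ - (p.map tauF) * p⁻¹
        = Matrix.diagonal (fun i => (HahnSeries.C ((A i i).coeff 0) : LaurentSeries k)) := by
  -- Setup
  set lam : Fin n → k := fun i => (A i i).coeff 0 with hlam
  set Cm : ℕ → Matrix (Fin n) (Fin n) k :=
    fun m => Matrix.of fun i j => (A i j).coeff (m : ℤ) with hCm
  have hC0 : Cm 0 = Matrix.diagonal lam := by
    ext i j
    by_cases h : i = j
    · subst h; simp [hCm, hlam, Matrix.diagonal_apply_eq]
    · simp [hCm, Matrix.diagonal_apply_ne _ h, hdiag i j h]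
  have hden : ∀ i j, ∀ m : ℕ, 0 < m → lam i - lam j + (m : k) ≠ 0 := by
    intro i j m hm
    by_cases h : i = j
    · subst h
      simp only [sub_self, zero_add]
      exact_mod_cast Nat.cast_ne_zero.mpr hm.ne'
    · exact fun habs => hres i j h (-(m : ℤ)) (by push_cast; linear_combination habs)
  set P : ℕ → Matrix (Fin n) (Fin n) k := stmt13P lam Cm with hP
  have hkey := stmt13P_key lam Cm hC0 hden
  -- Power series matrices
  set PM : Matrix (Fin n) (Fin n) (PowerSeries k) :=
    Matrix.of fun i j => PowerSeries.mk fun m => P m i j with hPM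
  set B : Matrix (Fin n) (Fin n) (PowerSeries k) :=
    Matrix.of fun i j => PowerSeries.mk fun m => (A i j).coeff (m : ℤ) with hB
  set TM : Matrix (Fin n) (Fin n) (PowerSeries k) :=
    Matrix.of fun i j => PowerSeries.mk fun m => (m : k) * P m i j with hTM
  set Dm : Matrix (Fin n) (Fin n) (PowerSeries k) :=
    Matrix.diagonal (fun i => PowerSeries.C (lam i)) with hDm
  -- The key power series identity
  have main : PM * B = Dm * PM + TM := by
    ext i j mdeg
    rw [Matrix.add_apply, map_add]
    rw [Matrix.mul_apply, map_sum]
    have lhs_eq : ∀ j' : Fin n, (PowerSeries.coeff mdeg) (PM i j' * B j' j)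
        = ∑ l ∈ Finset.range (mdeg + 1), P l i j' * (Cm (mdeg - l)) j' j := by
      intro j'
      rw [PowerSeries.coeff_mul, Finset.Nat.sum_antidiagonal_eq_sum_range_succ_mk]
      simp [hPM, hB, hCm]
    rw [Finset.sum_congr rfl (fun j' _ => lhs_eq j')]
    rw [Finset.sum_comm]
    have : ∑ l ∈ Finset.range (mdeg + 1), ∑ j' : Fin n, P l i j' * (Cm (mdeg - l)) j' j
        = ∑ l ∈ Finset.range (mdeg + 1), (P l * Cm (mdeg - l)) i j := by
      refine Finset.sum_congr rfl fun l _ => ?_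
      rw [Matrix.mul_apply]
    rw [this, hkey mdeg i j]
    congr 1
    · rw [hDm, Matrix.diagonal_mul]
      simp [hPM, hP, PowerSeries.coeff_C_mul]
    · simp [hTM, hP]
  -- Transport to Laurent series
  set φ : PowerSeries k →+* LaurentSeries k := HahnSeries.ofPowerSeries ℤ k with hφ
  have hneg : ∀ f : PowerSeries k, ∀ m : ℤ, m < 0 → (φ f).coeff m = 0 := by
    intro f m hm
    rw [hφ, HahnSeries.ofPowerSeries_apply]
    refine HahnSeries.embDomain_notin_range ?_
    rintro ⟨a, ha⟩
    have ha : ((a : ℕ) : ℤ) = m := ha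
    omega
  have hpos : ∀ f : PowerSeries k, ∀ m : ℕ, (φ f).coeff (m : ℤ) = PowerSeries.coeff m f := by
    intro f m
    rw [hφ]
    exact HahnSeries.ofPowerSeries_apply_coeff f m
  set p : Matrix (Fin n) (Fin n) (LaurentSeries k) := PM.map φ with hp
  -- A is the image of B
  have hAB : A = B.map φ := by
    ext i j m
    rw [Matrix.map_apply]
    rcases m with m' | m'
    · rw [Int.ofNat_eq_coe, hpos]
      simp [hB]
    · rw [hneg _ _ (Int.negSucc_lt_zero m'), hA i j _ (Int.negSucc_lt_zero m')]
  -- tau of p is the image of TM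
  have hT : p.map tauF = TM.map φ := by
    ext i j m
    rw [Matrix.map_apply, Matrix.map_apply]
    show (m : k) * ((p i j).coeff m) = _
    rcases m with m' | m'
    · rw [hp, Matrix.map_apply, Int.ofNat_eq_coe, hpos, hpos]
      simp [hPM, hTM]
    · rw [hp, Matrix.map_apply, hneg _ _ (Int.negSucc_lt_zero m'),
        hneg _ _ (Int.negSucc_lt_zero m'), mul_zero]
  -- the diagonal matrix
  have hD : Dm.map φ = Matrix.diagonal (fun i => (HahnSeries.C (lam i) : LaurentSeries k)) := by
    rw [hDm, Matrix.diagonal_map (map_zero φ)]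
    congr 1
    funext i
    simp [hφ]
  -- invertibility of p
  have hPM0 : PM.map (PowerSeries.constantCoeff (R := k)) = 1 := by
    ext i j
    rw [Matrix.map_apply]
    simp only [hPM, Matrix.of_apply, PowerSeries.constantCoeff_mk]
    show P 0 i j = _
    rw [hP, show stmt13P lam Cm 0 = 1 from by rw [stmt13P]]
  have hdetPM : IsUnit PM.det := by
    rw [PowerSeries.isUnit_iff_constantCoeff, RingHom.map_det,
      RingHom.mapMatrix_apply, hPM0, Matrix.det_one]
    exact isUnit_one
  have hdet : IsUnit p.det := by
    rw [hp, ← RingHom.mapMatrix_apply, ← RingHom.map_det]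
    exact hdetPM.map φ
  -- the transported identity
  have main' : p * A = Matrix.diagonal (fun i => (HahnSeries.C (lam i) : LaurentSeries k)) * p
      + p.map tauF := by
    rw [hAB, hT, hp, ← Matrix.map_mul, main, ← hD, ← Matrix.map_mul, Matrix.map_add _ (fun a b => map_add φ a b)]
  refine ⟨p, hdet, ?_, ?_⟩
  · -- p ≡ 1 mod z
    intro i j m hm
    have : ((p - 1) i j).coeff m = (p i j).coeff m - ((1 : Matrix (Fin n) (Fin n)
        (LaurentSeries k)) i j).coeff m := by
      rw [Matrix.sub_apply, HahnSeries.coeff_sub]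
    rw [this]
    rcases lt_or_eq_of_le hm with hlt | heq
    · rw [hp, Matrix.map_apply, hneg _ _ hlt]
      rw [Matrix.one_apply]
      by_cases h : i = j
      · simp [h, HahnSeries.coeff_one, hlt.ne]
      · simp [h]
    · subst heq
      have h0 : ((0 : ℤ)) = ((0 : ℕ) : ℤ) := rfl
      rw [hp, Matrix.map_apply, h0, hpos]
      simp only [hPM, Matrix.of_apply, PowerSeries.coeff_mk]
      have hP0 : P 0 i j = (1 : Matrix (Fin n) (Fin n) k) i j := by
        rw [hP, show stmt13P lam Cm 0 = 1 from by rw [stmt13P]]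
      rw [hP0, Matrix.one_apply]
      rw [Matrix.one_apply]
      by_cases h : i = j
      · simp [h, HahnSeries.coeff_one]
      · simp [h]
  · -- the gauge identity
    have hinv : p * p⁻¹ = 1 := Matrix.mul_nonsing_inv p hdet
    calc p * A * p⁻¹ - (p.map tauF) * p⁻¹
        = (Matrix.diagonal (fun i => (HahnSeries.C (lam i) : LaurentSeries k)) * p
            + p.map tauF) * p⁻¹ - (p.map tauF) * p⁻¹ := by rw [main']
      _ = Matrix.diagonal (fun i => (HahnSeries.C (lam i) : LaurentSeries k)) * (p * p⁻¹) := by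
          rw [Matrix.add_mul, add_sub_cancel_right, Matrix.mul_assoc]
      _ = Matrix.diagonal (fun i => (HahnSeries.C (lam i) : LaurentSeries k)) := by
          rw [hinv, Matrix.mul_one]
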